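/- For α > 0 define G_α(τ) = α²·cos²τ + sin²τ and h_α(x) = √α · ∫₀ˣ G_α(τ)^{−1/2} dτ. Then h_α : ℝ → ℝ is a smooth, strictly increasing bijection; let g_α denote its inverse function. The function z_α(u) = ln( G_α(g_α(u)) / α ) satisfies the ordinary differential equation z'' (u) + 4·sinh z(u) = 0 for all u ∈ ℝ, together with the initial conditions z_α(0) = ln α and z_α'(0) = 0. -/

import Mathlib

open Real

noncomputable section

/-- `G_α(τ) = α²·cos²τ + sin²τ`. -/
def Gfun (α τ : ℝ) : ℝ := α ^ 2 * Real.cos τ ^ 2 + Real.sin τ ^ 2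

/-- `h_α(x) = √α · ∫₀ˣ G_α(τ)^{−1/2} dτ`. -/
def hfun (α : ℝ) (x : ℝ) : ℝ := Real.sqrt α * ∫ τ in (0:ℝ)..x, 1 / Real.sqrt (Gfun α τ)

/-- `g_α`, the inverse function of `h_α`. -/
def gfun (α : ℝ) : ℝ → ℝ := Function.invFun (hfun α)

/-- `z_α(u) = ln( G_α(g_α(u)) / α )`. -/
def zfun (α : ℝ) (u : ℝ) : ℝ := Real.log (Gfun α (gfun α u) / α)

lemma Gfun_pos {α : ℝ} (hα : 0 < α) (τ : ℝ) : 0 < Gfun α τ := by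
  have h := Real.sin_sq_add_cos_sq τ
  have h2 := sq_nonneg (Real.sin τ)
  have h3 := sq_nonneg (Real.cos τ)
  have h4 : 0 < α ^ 2 := by positivity
  unfold Gfun
  rcases le_total (α ^ 2) 1 with hc | hc
  · nlinarith [mul_nonneg (sub_nonneg.2 hc) h2]
  · nlinarith [mul_nonneg (sub_nonneg.2 hc) h3]

lemma Gfun_le {α : ℝ} (τ : ℝ) : Gfun α τ ≤ α ^ 2 + 1 := by
  have h := Real.sin_sq_add_cos_sq τ
  have h2 := sq_nonneg (Real.sin τ)
  have h3 := sq_nonneg (Real.cos τ)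
  have h4 : 0 ≤ α ^ 2 := sq_nonneg α
  unfold Gfun
  nlinarith [mul_nonneg h4 h2]

lemma Gfun_contDiff (α : ℝ) : ContDiff ℝ (⊤ : ℕ∞) (Gfun α) :=
  (contDiff_const.mul (Real.contDiff_cos.pow 2)).add (Real.contDiff_sin.pow 2)

lemma integrand_contDiff {α : ℝ} (hα : 0 < α) :
    ContDiff ℝ (⊤ : ℕ∞) (fun τ => 1 / Real.sqrt (Gfun α τ)) := by
  rw [contDiff_iff_contDiffAt]
  intro τ
  have h1 : ContDiffAt ℝ (⊤ : ℕ∞) (fun τ => Real.sqrt (Gfun α τ)) τ :=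
    (Real.contDiffAt_sqrt (Gfun_pos hα τ).ne').comp τ (Gfun_contDiff α).contDiffAt
  have h2 : Real.sqrt (Gfun α τ) ≠ 0 := (Real.sqrt_pos.2 (Gfun_pos hα τ)).ne'
  simp only [one_div]; exact h1.inv h2

lemma integrand_cont {α : ℝ} (hα : 0 < α) :
    Continuous (fun τ => 1 / Real.sqrt (Gfun α τ)) :=
  (integrand_contDiff hα).continuous

lemma hfun_hasDerivAt {α : ℝ} (hα : 0 < α) (x : ℝ) :
    HasDerivAt (hfun α) (Real.sqrt α * (1 / Real.sqrt (Gfun α x))) x :=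
  (((integrand_cont hα).integral_hasStrictDerivAt 0 x).hasDerivAt).const_mul (Real.sqrt α)

lemma hfun_deriv {α : ℝ} (hα : 0 < α) :
    deriv (hfun α) = fun x => Real.sqrt α * (1 / Real.sqrt (Gfun α x)) :=
  funext fun x => (hfun_hasDerivAt hα x).deriv

lemma hfun_contDiff {α : ℝ} (hα : 0 < α) : ContDiff ℝ (⊤ : ℕ∞) (hfun α) := by
  rw [contDiff_infty_iff_deriv]
  refine ⟨fun x => (hfun_hasDerivAt hα x).differentiableAt, ?_⟩
  rw [hfun_deriv hα]
  exact contDiff_const.mul (integrand_contDiff hα)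

lemma hfun_strictMono {α : ℝ} (hα : 0 < α) : StrictMono (hfun α) := by
  refine strictMono_of_deriv_pos fun x => ?_
  rw [hfun_deriv hα]
  have := Gfun_pos hα x
  positivity

lemma integrand_lb {α : ℝ} (hα : 0 < α) (τ : ℝ) :
    1 / Real.sqrt (α ^ 2 + 1) ≤ 1 / Real.sqrt (Gfun α τ) := by
  have h1 : 0 < Gfun α τ := Gfun_pos hα τ
  have h2 : Real.sqrt (Gfun α τ) ≤ Real.sqrt (α ^ 2 + 1) := Real.sqrt_le_sqrt (Gfun_le τ)
  have h3 : 0 < Real.sqrt (Gfun α τ) := Real.sqrt_pos.2 h1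
  exact one_div_le_one_div_of_le h3 h2

lemma hfun_lb {α : ℝ} (hα : 0 < α) {x : ℝ} (hx : 0 ≤ x) :
    Real.sqrt α * (1 / Real.sqrt (α ^ 2 + 1)) * x ≤ hfun α x := by
  have h1 : (∫ τ in (0:ℝ)..x, (1 / Real.sqrt (α ^ 2 + 1) : ℝ)) ≤
      ∫ τ in (0:ℝ)..x, 1 / Real.sqrt (Gfun α τ) := by
    apply intervalIntegral.integral_mono_on hx
    · exact intervalIntegrable_const
    · exact (integrand_cont hα).intervalIntegrable 0 x
    · exact fun t _ => integrand_lb hα t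
  rw [intervalIntegral.integral_const, smul_eq_mul, sub_zero] at h1
  unfold hfun
  have h2 : (0:ℝ) ≤ Real.sqrt α := Real.sqrt_nonneg α
  nlinarith

lemma hfun_ub {α : ℝ} (hα : 0 < α) {x : ℝ} (hx : x ≤ 0) :
    hfun α x ≤ Real.sqrt α * (1 / Real.sqrt (α ^ 2 + 1)) * x := by
  have h1 : (∫ τ in x..(0:ℝ), (1 / Real.sqrt (α ^ 2 + 1) : ℝ)) ≤
      ∫ τ in x..(0:ℝ), 1 / Real.sqrt (Gfun α τ) := by
    apply intervalIntegral.integral_mono_on hx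
    · exact intervalIntegrable_const
    · exact (integrand_cont hα).intervalIntegrable x 0
    · exact fun t _ => integrand_lb hα t
  rw [intervalIntegral.integral_const, smul_eq_mul, zero_sub] at h1
  have h3 : (∫ τ in (0:ℝ)..x, 1 / Real.sqrt (Gfun α τ)) =
      -∫ τ in x..(0:ℝ), 1 / Real.sqrt (Gfun α τ) := by
    rw [intervalIntegral.integral_symm]
  unfold hfun
  rw [h3]
  have h2 : (0:ℝ) ≤ Real.sqrt α := Real.sqrt_nonneg α
  nlinarith

lemma hfun_surjective {α : ℝ} (hα : 0 < α) : Function.Surjective (hfun α) := by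
  have hc : (0:ℝ) < Real.sqrt α * (1 / Real.sqrt (α ^ 2 + 1)) := by
    have : (0:ℝ) < α ^ 2 + 1 := by positivity
    have h1 : (0:ℝ) < Real.sqrt (α ^ 2 + 1) := Real.sqrt_pos.2 this
    have h2 : (0:ℝ) < Real.sqrt α := Real.sqrt_pos.2 hα
    positivity
  have hcont : Continuous (hfun α) := (hfun_contDiff hα).continuous
  have hlin_top : Filter.Tendsto (fun x : ℝ => Real.sqrt α * (1 / Real.sqrt (α ^ 2 + 1)) * x)
      Filter.atTop Filter.atTop := Filter.Tendsto.const_mul_atTop hc Filter.tendsto_id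
  have hlin_bot : Filter.Tendsto (fun x : ℝ => Real.sqrt α * (1 / Real.sqrt (α ^ 2 + 1)) * x)
      Filter.atBot Filter.atBot := Filter.Tendsto.const_mul_atBot hc Filter.tendsto_id
  have htop : Filter.Tendsto (hfun α) Filter.atTop Filter.atTop :=
    Filter.tendsto_atTop_mono' _ (Filter.eventually_atTop.2 ⟨0, fun x hx => hfun_lb hα hx⟩)
      hlin_top
  have hbot : Filter.Tendsto (hfun α) Filter.atBot Filter.atBot :=
    Filter.tendsto_atBot_mono' _ (Filter.eventually_atBot.2 ⟨0, fun x hx => hfun_ub hα hx⟩)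
      hlin_bot
  exact hcont.surjective htop hbot

lemma hfun_bijective {α : ℝ} (hα : 0 < α) : Function.Bijective (hfun α) :=
  ⟨(hfun_strictMono hα).injective, hfun_surjective hα⟩

lemma gfun_rightInv {α : ℝ} (hα : 0 < α) (u : ℝ) : hfun α (gfun α u) = u :=
  Function.rightInverse_invFun (hfun_surjective hα) u

lemma gfun_leftInv {α : ℝ} (hα : 0 < α) (x : ℝ) : gfun α (hfun α x) = x :=
  Function.leftInverse_invFun (hfun_strictMono hα).injective x

lemma hfun_zero (α : ℝ) : hfun α 0 = 0 := by
  simp [hfun]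

lemma gfun_zero {α : ℝ} (hα : 0 < α) : gfun α 0 = 0 := by
  have := gfun_leftInv hα 0
  rwa [hfun_zero] at this

lemma gfun_continuous {α : ℝ} (hα : 0 < α) : Continuous (gfun α) := by
  have he : gfun α = ⇑(StrictMono.orderIsoOfSurjective (hfun α) (hfun_strictMono hα)
      (hfun_surjective hα)).symm := by
    funext u
    apply (hfun_strictMono hα).injective
    rw [gfun_rightInv hα, StrictMono.orderIsoOfSurjective_self_symm_apply (h_mono := hfun_strictMono hα) (h_surj := hfun_surjective hα)]
  rw [he]
  exact OrderIso.continuous _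

lemma gfun_hasDerivAt {α : ℝ} (hα : 0 < α) (u : ℝ) :
    HasDerivAt (gfun α) (Real.sqrt (Gfun α (gfun α u)) / Real.sqrt α) u := by
  have hd := hfun_hasDerivAt hα (gfun α u)
  have hG : 0 < Gfun α (gfun α u) := Gfun_pos hα _
  have hsG : 0 < Real.sqrt (Gfun α (gfun α u)) := Real.sqrt_pos.2 hG
  have hsa : 0 < Real.sqrt α := Real.sqrt_pos.2 hα
  have hne : Real.sqrt α * (1 / Real.sqrt (Gfun α (gfun α u))) ≠ 0 := by positivity
  have := HasDerivAt.of_local_left_inverse (gfun_continuous hα).continuousAt hd hne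
    (Filter.Eventually.of_forall (gfun_rightInv hα))
  refine this.congr_deriv ?_
  rw [one_div, mul_inv, inv_inv, div_eq_mul_inv, mul_comm]

lemma Gfun_hasDerivAt (α t : ℝ) :
    HasDerivAt (Gfun α) (2 * (1 - α ^ 2) * Real.sin t * Real.cos t) t := by
  have h1 := ((Real.hasDerivAt_cos t).pow 2).const_mul (α ^ 2)
  have h2 := (Real.hasDerivAt_sin t).pow 2
  have := h1.add h2
  refine this.congr_deriv ?_
  norm_num
  ring

lemma zfun_hasDerivAt {α : ℝ} (hα : 0 < α) (u : ℝ) :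
    HasDerivAt (zfun α)
      (2 * (1 - α ^ 2) * Real.sin (gfun α u) * Real.cos (gfun α u) /
        (Real.sqrt α * Real.sqrt (Gfun α (gfun α u)))) u := by
  set t := gfun α u with ht
  have hG : 0 < Gfun α t := Gfun_pos hα t
  have hsG : 0 < Real.sqrt (Gfun α t) := Real.sqrt_pos.2 hG
  have hsa : 0 < Real.sqrt α := Real.sqrt_pos.2 hα
  have hGg : HasDerivAt (fun u => Gfun α (gfun α u))
      (2 * (1 - α ^ 2) * Real.sin t * Real.cos t * (Real.sqrt (Gfun α t) / Real.sqrt α)) u :=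
    (Gfun_hasDerivAt α (gfun α u)).comp u (gfun_hasDerivAt hα u)
  have hdiv := hGg.div_const α
  have hlog := hdiv.log (by positivity : Gfun α t / α ≠ 0)
  have hz : zfun α = fun u => Real.log (Gfun α (gfun α u) / α) := rfl
  rw [hz]
  convert hlog using 1
  have h1 : Real.sqrt (Gfun α t) * Real.sqrt (Gfun α t) = Gfun α t := Real.mul_self_sqrt hG.le
  have h2 : Real.sqrt α * Real.sqrt α = α := Real.mul_self_sqrt hα.le
  rw [← ht]
  field_simp
  ring_nf
  have h1' : Real.sqrt (Gfun α t) ^ 2 = Gfun α t := Real.sq_sqrt hG.le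
  linear_combination ((α ^ 2 - 1) * Real.sin t * Real.cos t) * h1'

lemma zderiv_eq {α : ℝ} (hα : 0 < α) :
    deriv (zfun α) = fun u => 2 * (1 - α ^ 2) * Real.sin (gfun α u) * Real.cos (gfun α u) /
      (Real.sqrt α * Real.sqrt (Gfun α (gfun α u))) :=
  funext fun u => (zfun_hasDerivAt hα u).deriv

lemma sc_hasDerivAt (α t : ℝ) :
    HasDerivAt (fun τ => 2 * (1 - α ^ 2) * Real.sin τ * Real.cos τ)
      (2 * (1 - α ^ 2) * (Real.cos t ^ 2 - Real.sin t ^ 2)) t := by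
  have h := ((Real.hasDerivAt_sin t).mul (Real.hasDerivAt_cos t)).const_mul (2 * (1 - α ^ 2))
  convert h using 2 with τ
  · rfl
  · rfl
  · simp only [Pi.mul_apply]; ring
  · ring

lemma div_deriv_aux (α G N Npp : ℝ) (hα : 0 < α) (hG : 0 < G) :
    (Npp * (Real.sqrt G / Real.sqrt α) * (Real.sqrt α * Real.sqrt G) -
        N * (Real.sqrt α * (N * (Real.sqrt G / Real.sqrt α) / (2 * Real.sqrt G)))) /
      (Real.sqrt α * Real.sqrt G) ^ 2 = (Npp * G - N ^ 2 / 2) / (α * G) := by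
  have hsG : 0 < Real.sqrt G := Real.sqrt_pos.2 hG
  have hsa : 0 < Real.sqrt α := Real.sqrt_pos.2 hα
  have h1 : Real.sqrt G ^ 2 = G := Real.sq_sqrt hG.le
  have h2 : Real.sqrt α ^ 2 = α := Real.sq_sqrt hα.le
  field_simp
  ring_nf
  linear_combination (-2 * Npp * G * Real.sqrt G ^ 2 +
      N ^ 2 * Real.sqrt G ^ 2) * h2 +
    (N ^ 2 * α) * h1

lemma zderiv_hasDerivAt {α : ℝ} (hα : 0 < α) (u : ℝ) :
    HasDerivAt (fun u => 2 * (1 - α ^ 2) * Real.sin (gfun α u) * Real.cos (gfun α u) /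
        (Real.sqrt α * Real.sqrt (Gfun α (gfun α u))))
      ((2 * (1 - α ^ 2) * (Real.cos (gfun α u) ^ 2 - Real.sin (gfun α u) ^ 2) *
          Gfun α (gfun α u) -
        (2 * (1 - α ^ 2) * Real.sin (gfun α u) * Real.cos (gfun α u)) ^ 2 / 2) /
        (α * Gfun α (gfun α u))) u := by
  have hG : 0 < Gfun α (gfun α u) := Gfun_pos hα _
  have hsG : 0 < Real.sqrt (Gfun α (gfun α u)) := Real.sqrt_pos.2 hG
  have hsa : 0 < Real.sqrt α := Real.sqrt_pos.2 hα
  have hg := gfun_hasDerivAt hα u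
  have hN : HasDerivAt (fun u => 2 * (1 - α ^ 2) * Real.sin (gfun α u) * Real.cos (gfun α u))
      (2 * (1 - α ^ 2) * (Real.cos (gfun α u) ^ 2 - Real.sin (gfun α u) ^ 2) *
        (Real.sqrt (Gfun α (gfun α u)) / Real.sqrt α)) u :=
    (sc_hasDerivAt α (gfun α u)).comp u hg
  have hGg : HasDerivAt (fun u => Gfun α (gfun α u))
      (2 * (1 - α ^ 2) * Real.sin (gfun α u) * Real.cos (gfun α u) *
        (Real.sqrt (Gfun α (gfun α u)) / Real.sqrt α)) u :=
    (Gfun_hasDerivAt α (gfun α u)).comp u hg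
  have hsq := hGg.sqrt hG.ne'
  have hD := hsq.const_mul (Real.sqrt α)
  have hq := hN.div hD (by positivity)
  refine hq.congr_deriv ?_
  exact (div_deriv_aux α (Gfun α (gfun α u))
    (2 * (1 - α ^ 2) * Real.sin (gfun α u) * Real.cos (gfun α u))
    (2 * (1 - α ^ 2) * (Real.cos (gfun α u) ^ 2 - Real.sin (gfun α u) ^ 2)) hα hG)

lemma zfun_ode {α : ℝ} (hα : 0 < α) (u : ℝ) :
    deriv (deriv (zfun α)) u + 4 * Real.sinh (zfun α u) = 0 := by
  rw [zderiv_eq hα]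
  rw [(zderiv_hasDerivAt hα u).deriv]
  have hG : 0 < Gfun α (gfun α u) := Gfun_pos hα _
  have hsinh : Real.sinh (zfun α u) =
      (Gfun α (gfun α u) / α - α / Gfun α (gfun α u)) / 2 := by
    rw [zfun, Real.sinh_eq, Real.exp_neg, Real.exp_log (by positivity)]
    rw [inv_div]
  rw [hsinh]
  have hsc := Real.sin_sq_add_cos_sq (gfun α u)
  have hGne : α ^ 2 * Real.cos (gfun α u) ^ 2 + Real.sin (gfun α u) ^ 2 ≠ 0 := by
    have h := hG; unfold Gfun at h; exact h.ne'
  unfold Gfun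
  field_simp [hGne]
  ring_nf
  linear_combination (4 * α ^ 2 * (Real.sin (gfun α u) ^ 2 + Real.cos (gfun α u) ^ 2 + 1)) * hsc

lemma zfun_init {α : ℝ} (hα : 0 < α) : zfun α 0 = Real.log α := by
  rw [zfun, gfun_zero hα]
  have : Gfun α 0 = α ^ 2 := by simp [Gfun]
  rw [this]
  rw [show α ^ 2 / α = α by field_simp]

lemma zfun_deriv_init {α : ℝ} (hα : 0 < α) : deriv (zfun α) 0 = 0 := by
  rw [zderiv_eq hα]
  simp only [gfun_zero hα, Real.sin_zero]
  simp

/-- for `α > 0` the function `h_α` is a smooth strictly increasing bijection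
of `ℝ`, and `z_α(u) = ln(G_α(g_α(u))/α)` solves `z'' + 4·sinh z = 0` with `z_α(0) = ln α`
and `z_α'(0) = 0`. -/
theorem stmt_12 (α : ℝ) (hα : 0 < α) :
    ContDiff ℝ (⊤ : ℕ∞) (hfun α) ∧ StrictMono (hfun α) ∧ Function.Bijective (hfun α) ∧
    (∀ u : ℝ, deriv (deriv (zfun α)) u + 4 * Real.sinh (zfun α u) = 0) ∧
    zfun α 0 = Real.log α ∧ deriv (zfun α) 0 = 0 := by
  exact ⟨hfun_contDiff hα, hfun_strictMono hα, hfun_bijective hα, fun u => zfun_ode hα u,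
    zfun_init hα, zfun_deriv_init hα⟩
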